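/- For complex q, z with |q| < 1 and |zq| < 1, ν₁(z;q) := Σ_{n≥0} zⁿ q^{n²+n} / (−q; q²)_{n+1} = Σ_{n≥0} (zq; q²)_n (−q)ⁿ. -/

import Mathlib

open scoped BigOperators

/-- Finite q-Pochhammer symbol `(a; q)_n`. -/
noncomputable def qPoch (a q : ℂ) (n : ℕ) : ℂ :=
  ∏ k ∈ Finset.range n, (1 - a * q ^ k)

/-- Infinite q-Pochhammer symbol `(a; q)_∞`. -/
noncomputable def qPochInf (a q : ℂ) : ℂ :=
  ∏' k : ℕ, (1 - a * q ^ k)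

namespace AY

open Filter Topology

lemma qPoch_succ (a q : ℂ) (n : ℕ) :
    qPoch a q (n + 1) = qPoch a q n * (1 - a * q ^ n) :=
  Finset.prod_range_succ _ _

/-- Terms of the left-hand side, as a function of `w`. -/
noncomputable def a (q w : ℂ) (n : ℕ) : ℂ :=
  w ^ n * q ^ (n ^ 2 + n) / qPoch (-q) (q ^ 2) (n + 1)

/-- The left-hand side as a function of `w`. -/
noncomputable def f (q w : ℂ) : ℂ := ∑' n, a q w n

variable {q : ℂ}

lemma factor_ne (hq : ‖q‖ < 1) (k : ℕ) : 1 - -q * (q ^ 2) ^ k ≠ 0 := by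
  intro h
  have h1 : -q * (q ^ 2) ^ k = 1 := (sub_eq_zero.mp h).symm
  have h2 := congrArg norm h1
  simp only [norm_mul, norm_neg, norm_pow, norm_one] at h2
  have h3 : (‖q‖ ^ 2) ^ k ≤ 1 := pow_le_one₀ (by positivity) (by nlinarith [norm_nonneg q])
  nlinarith [norm_nonneg q]

lemma P_ne (hq : ‖q‖ < 1) (m : ℕ) : qPoch (-q) (q ^ 2) m ≠ 0 :=
  Finset.prod_ne_zero_iff.mpr fun k _ => factor_ne hq k

lemma a_succ (hq : ‖q‖ < 1) (w : ℂ) (n : ℕ) :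
    a q w (n + 1) = (w * q ^ (2 * n + 2) / (1 - -q * (q ^ 2) ^ (n + 1))) * a q w n := by
  have h1 := P_ne hq (n + 1)
  have h2 := factor_ne hq (n + 1)
  unfold a
  rw [show qPoch (-q) (q ^ 2) (n + 1 + 1)
      = qPoch (-q) (q ^ 2) (n + 1) * (1 - -q * (q ^ 2) ^ (n + 1)) from qPoch_succ _ _ _]
  field_simp
  ring

lemma summable_norm_a (hq : ‖q‖ < 1) (w : ℂ) : Summable fun n => ‖a q w n‖ := by
  have hq1 : (0:ℝ) < 1 - ‖q‖ := by linarith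
  have hr : ‖q‖ ^ 2 < 1 := by nlinarith [norm_nonneg q]
  have h0 : Tendsto (fun n : ℕ => ‖w‖ * ‖q‖ ^ (2 * n + 2) / (1 - ‖q‖)) atTop (𝓝 0) := by
    have heq : (fun n : ℕ => ‖w‖ * ‖q‖ ^ (2 * n + 2) / (1 - ‖q‖))
        = fun n : ℕ => (‖w‖ * ‖q‖ ^ 2 / (1 - ‖q‖)) * (‖q‖ ^ 2) ^ n := by
      funext n
      rw [pow_add, pow_mul]
      ring
    rw [heq]
    simpa using (tendsto_pow_atTop_nhds_zero_of_lt_one (by positivity) hr).const_mul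
      (‖w‖ * ‖q‖ ^ 2 / (1 - ‖q‖))
  apply summable_of_ratio_norm_eventually_le (r := 1/2) (by norm_num)
  filter_upwards [h0.eventually (gt_mem_nhds (by norm_num : (0:ℝ) < 1/2))] with n hn
  rw [norm_norm, norm_norm, a_succ hq, norm_mul]
  have hd : 1 - ‖q‖ ≤ ‖1 - -q * (q ^ 2) ^ (n + 1)‖ := by
    have h4 := norm_sub_norm_le (1 : ℂ) (-q * (q ^ 2) ^ (n + 1))
    have h5 : ‖-q * (q ^ 2) ^ (n + 1)‖ = ‖q‖ * (‖q‖ ^ 2) ^ (n + 1) := by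
      simp [norm_mul, norm_pow]
    have h6 : (‖q‖ ^ 2) ^ (n + 1) ≤ 1 := pow_le_one₀ (by positivity) hr.le
    rw [h5] at h4
    simp only [norm_one] at h4
    nlinarith [norm_nonneg q]
  have hb : ‖w * q ^ (2 * n + 2) / (1 - -q * (q ^ 2) ^ (n + 1))‖ ≤ 1/2 := by
    rw [norm_div, norm_mul, norm_pow]
    calc ‖w‖ * ‖q‖ ^ (2 * n + 2) / ‖1 - -q * (q ^ 2) ^ (n + 1)‖
        ≤ ‖w‖ * ‖q‖ ^ (2 * n + 2) / (1 - ‖q‖) :=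
          div_le_div_of_nonneg_left (by positivity) hq1 hd
      _ ≤ 1/2 := hn.le
  calc ‖w * q ^ (2 * n + 2) / (1 - -q * (q ^ 2) ^ (n + 1))‖ * ‖a q w n‖
      ≤ 1/2 * ‖a q w n‖ := mul_le_mul_of_nonneg_right hb (norm_nonneg _)

lemma summable_a (hq : ‖q‖ < 1) (w : ℂ) : Summable (a q w) :=
  (summable_norm_a hq w).of_norm

lemma norm_a_mono (hq : ‖q‖ < 1) {w z : ℂ} (h : ‖w‖ ≤ ‖z‖) (n : ℕ) :
    ‖a q w n‖ ≤ ‖a q ((‖z‖ : ℂ)) n‖ := by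
  unfold a
  simp only [norm_div, norm_mul, norm_pow, Complex.norm_real, norm_norm]
  gcongr

lemma norm_f_le (hq : ‖q‖ < 1) {w z : ℂ} (h : ‖w‖ ≤ ‖z‖) :
    ‖f q w‖ ≤ ∑' n, ‖a q ((‖z‖ : ℂ)) n‖ :=
  tsum_of_norm_bounded (summable_norm_a hq _).hasSum (norm_a_mono hq h)

lemma key (hq : ‖q‖ < 1) (w : ℂ) (n : ℕ) :
    -q * (1 - w * q) * a q (w * q ^ 2) n
      = a q w (n + 1) + q ^ (2 * (n + 1) + 1) * a q w (n + 1)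
        - q ^ (2 * n + 1) * a q w n := by
  have h2 : (1 : ℂ) + q ^ (2 * n + 3) ≠ 0 := by
    intro h
    exact factor_ne hq (n + 1) (by linear_combination h)
  have hash : a q (w * q ^ 2) n = q ^ (2 * n) * a q w n := by
    unfold a
    rw [mul_pow]
    ring
  have hsub : (1 : ℂ) - -q * (q ^ 2) ^ (n + 1) = 1 + q ^ (2 * n + 3) := by ring
  rw [hash, a_succ hq w n, hsub]
  field_simp
  ring

lemma funEq (hq : ‖q‖ < 1) (w : ℂ) : f q w = 1 - q * (1 - w * q) * f q (w * q ^ 2) := by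
  have S : Summable (a q w) := summable_a hq w
  have Sg : Summable (fun n => q ^ (2 * n + 1) * a q w n) := by
    apply Summable.of_norm
    apply Summable.of_nonneg_of_le (fun n => norm_nonneg _) _ (summable_norm_a hq w)
    intro n
    rw [norm_mul, norm_pow]
    have h1 : ‖q‖ ^ (2 * n + 1) ≤ 1 := pow_le_one₀ (norm_nonneg q) hq.le
    nlinarith [norm_nonneg (a q w n)]
  have S1 : Summable (fun n => a q w (n + 1)) := (summable_nat_add_iff 1).mpr S
  have Sg1 : Summable (fun n => q ^ (2 * (n + 1) + 1) * a q w (n + 1)) :=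
    (summable_nat_add_iff (f := fun n => q ^ (2 * n + 1) * a q w n) 1).mpr Sg
  have e0 : f q w = a q w 0 + ∑' n, a q w (n + 1) := Summable.tsum_eq_zero_add S
  have eg : (∑' n, q ^ (2 * n + 1) * a q w n)
      = q ^ (2 * 0 + 1) * a q w 0 + ∑' n, q ^ (2 * (n + 1) + 1) * a q w (n + 1) :=
    Summable.tsum_eq_zero_add Sg
  have main : -q * (1 - w * q) * f q (w * q ^ 2)
      = f q w - (1 + q) * a q w 0 := by
    calc -q * (1 - w * q) * f q (w * q ^ 2)
        = ∑' n, (-q * (1 - w * q) * a q (w * q ^ 2) n) := tsum_mul_left.symm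
      _ = ∑' n, (a q w (n + 1) + q ^ (2 * (n + 1) + 1) * a q w (n + 1)
            - q ^ (2 * n + 1) * a q w n) := tsum_congr (key hq w)
      _ = (∑' n, a q w (n + 1)) + (∑' n, q ^ (2 * (n + 1) + 1) * a q w (n + 1))
            - ∑' n, q ^ (2 * n + 1) * a q w n := by
          rw [Summable.tsum_sub (S1.add Sg1) Sg, Summable.tsum_add S1 Sg1]
      _ = f q w - (1 + q) * a q w 0 := by
          rw [eq_sub_of_add_eq' e0.symm, eq_sub_of_add_eq' eg.symm]
          ring
  have h1q : (1 : ℂ) + q ≠ 0 := by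
    have h2 := factor_ne hq 0
    simpa [sub_neg_eq_add] using h2
  have ha0 : (1 + q) * a q w 0 = 1 := by
    unfold a
    rw [show ((0:ℕ) ^ 2 + 0) = 0 from rfl]
    simp only [pow_zero, one_mul, zero_add, qPoch, Finset.prod_range_one, mul_one,
      sub_neg_eq_add]
    field_simp
  rw [ha0] at main
  linear_combination -main

lemma iterEq (hq : ‖q‖ < 1) (z : ℂ) (N : ℕ) :
    f q z = (∑ n ∈ Finset.range N, qPoch (z * q) (q ^ 2) n * (-q) ^ n)
      + (-q) ^ N * qPoch (z * q) (q ^ 2) N * f q (z * (q ^ 2) ^ N) := by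
  induction N with
  | zero => simp [qPoch]
  | succ N ih =>
    rw [ih, funEq hq (z * (q ^ 2) ^ N), Finset.sum_range_succ, qPoch_succ]
    have harg : z * (q ^ 2) ^ N * q ^ 2 = z * (q ^ 2) ^ (N + 1) := by ring
    rw [harg]
    ring

lemma norm_qPoch_le (hq : ‖q‖ < 1) (z : ℂ) (N : ℕ) :
    ‖qPoch (z * q) (q ^ 2) N‖ ≤ Real.exp (‖z * q‖ / (1 - ‖q‖ ^ 2)) := by
  have hr : ‖q‖ ^ 2 < 1 := by nlinarith [norm_nonneg q]
  rw [qPoch, norm_prod]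
  calc ∏ k ∈ Finset.range N, ‖1 - z * q * (q ^ 2) ^ k‖
      ≤ ∏ k ∈ Finset.range N, Real.exp (‖z * q‖ * (‖q‖ ^ 2) ^ k) := by
        apply Finset.prod_le_prod (fun k _ => norm_nonneg _)
        intro k _
        have h4 := norm_sub_le (1 : ℂ) (z * q * (q ^ 2) ^ k)
        have h5 : ‖z * q * (q ^ 2) ^ k‖ = ‖z * q‖ * (‖q‖ ^ 2) ^ k := by
          simp [norm_mul, norm_pow]
        rw [h5, norm_one] at h4
        have h6 := Real.add_one_le_exp (‖z * q‖ * (‖q‖ ^ 2) ^ k)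
        linarith
    _ = Real.exp (∑ k ∈ Finset.range N, ‖z * q‖ * (‖q‖ ^ 2) ^ k) := (Real.exp_sum _ _).symm
    _ ≤ Real.exp (‖z * q‖ / (1 - ‖q‖ ^ 2)) := by
        apply Real.exp_le_exp.mpr
        rw [← Finset.mul_sum, div_eq_mul_inv]
        apply mul_le_mul_of_nonneg_left _ (norm_nonneg _)
        calc ∑ k ∈ Finset.range N, (‖q‖ ^ 2) ^ k
            ≤ ∑' k : ℕ, (‖q‖ ^ 2) ^ k :=
              Summable.sum_le_tsum _ (fun k _ => by positivity)
                (summable_geometric_of_lt_one (by positivity) hr)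
          _ = (1 - ‖q‖ ^ 2)⁻¹ := tsum_geometric_of_lt_one (by positivity) hr

lemma rem_tendsto (hq : ‖q‖ < 1) (z : ℂ) :
    Tendsto (fun N : ℕ => (-q) ^ N * qPoch (z * q) (q ^ 2) N * f q (z * (q ^ 2) ^ N))
      atTop (𝓝 0) := by
  set C := ∑' n, ‖a q ((‖z‖ : ℂ)) n‖ with hC
  set K := Real.exp (‖z * q‖ / (1 - ‖q‖ ^ 2)) with hK
  have h3 : 0 ≤ C := tsum_nonneg fun n => norm_nonneg _
  have h4 : 0 ≤ K := Real.exp_nonneg _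
  apply squeeze_zero_norm (a := fun N : ℕ => (K * C) * ‖q‖ ^ N)
  · intro N
    rw [norm_mul, norm_mul, norm_pow, norm_neg]
    have h1 : ‖qPoch (z * q) (q ^ 2) N‖ ≤ K := norm_qPoch_le hq z N
    have h2 : ‖f q (z * (q ^ 2) ^ N)‖ ≤ C := by
      apply norm_f_le hq
      rw [norm_mul, norm_pow, norm_pow]
      have h6 : (‖q‖ ^ 2) ^ N ≤ 1 :=
        pow_le_one₀ (by positivity) (by nlinarith [norm_nonneg q])
      nlinarith [norm_nonneg z, pow_nonneg (pow_nonneg (norm_nonneg q) 2) N]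
    calc ‖q‖ ^ N * ‖qPoch (z * q) (q ^ 2) N‖ * ‖f q (z * (q ^ 2) ^ N)‖
        ≤ ‖q‖ ^ N * K * C := by
          gcongr
      _ = (K * C) * ‖q‖ ^ N := by ring
  · simpa using (tendsto_pow_atTop_nhds_zero_of_lt_one (norm_nonneg q) hq).const_mul (K * C)

end AY

theorem andrews_yee_nu1 (q z : ℂ) (hq : ‖q‖ < 1) (hzq : ‖z * q‖ < 1) :
    ∑' n : ℕ, z ^ n * q ^ (n ^ 2 + n) / qPoch (-q) (q ^ 2) (n + 1)
      = ∑' n : ℕ, qPoch (z * q) (q ^ 2) n * (-q) ^ n := by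
  have hlhs : (∑' n : ℕ, z ^ n * q ^ (n ^ 2 + n) / qPoch (-q) (q ^ 2) (n + 1)) = AY.f q z := rfl
  rw [hlhs]
  set K := Real.exp (‖z * q‖ / (1 - ‖q‖ ^ 2)) with hK
  have hb : ∀ n : ℕ, ‖qPoch (z * q) (q ^ 2) n * (-q) ^ n‖ ≤ K * ‖q‖ ^ n := by
    intro n
    rw [norm_mul, norm_pow, norm_neg]
    have := AY.norm_qPoch_le hq z n
    apply mul_le_mul_of_nonneg_right this (pow_nonneg (norm_nonneg q) n)
  have hS : Summable (fun n : ℕ => qPoch (z * q) (q ^ 2) n * (-q) ^ n) :=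
    Summable.of_norm_bounded ((summable_geometric_of_lt_one (norm_nonneg q) hq).mul_left K) hb
  have h1 : Filter.Tendsto (fun N : ℕ => ∑ n ∈ Finset.range N, qPoch (z * q) (q ^ 2) n * (-q) ^ n)
      Filter.atTop (nhds (∑' n : ℕ, qPoch (z * q) (q ^ 2) n * (-q) ^ n)) :=
    hS.hasSum.tendsto_sum_nat
  have h2 : Filter.Tendsto (fun N : ℕ => ∑ n ∈ Finset.range N, qPoch (z * q) (q ^ 2) n * (-q) ^ n)
      Filter.atTop (nhds (AY.f q z)) := by
    have h3 := (tendsto_const_nhds (x := AY.f q z) (f := Filter.atTop (α := ℕ))).sub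
      (AY.rem_tendsto hq z)
    rw [sub_zero] at h3
    apply h3.congr
    intro N
    linear_combination (AY.iterEq hq z N)
  exact tendsto_nhds_unique h2 h1
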